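/- Under the setup of the semi-second-order symplectic Euler method (f convex, L-smooth, s ∈ (0, 2/L], θ_k = k/2, c_k = θ_{k+1}/(θ_{k+1}² − θ_k²), updates x_k⁺ = x_k − (s/2)∇f(x_k), z_{k+1} = z_k − sθ_k∇f(x_k), x_{k+1} = (θ_k²/θ_{k+1}²)x_k⁺ + (1 − θ_k²/θ_{k+1}²)z_{k+1}), the Lyapunov sequence Φ_k = 2c_kθ_k²( f(x_k) − f⋆ − (s/4)‖∇f(x_k)‖² ) + (1/s)‖z_{k+1} − X⋆‖² is nonincreasing: Φ_{k+1} ≤ Φ_k for all k ≥ 0. -/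

import Mathlib

open Filter MeasureTheory
open scoped RealInnerProductSpace Topology

section aux
variable {E : Type*} [NormedAddCommGroup E] [InnerProductSpace ℝ E] [CompleteSpace E]

lemma sea_descent (f : E → ℝ) (g : E → E)
    (hgrad : ∀ x, HasGradientAt f (g x) x)
    (L : ℝ) (hL : 0 < L)
    (hsmooth : ∀ x y, ‖g x - g y‖ ≤ L * ‖x - y‖) (x y : E) :
    f y ≤ f x + ⟪g x, y - x⟫ + L / 2 * ‖y - x‖ ^ 2 := by
  set d := y - x with hd
  set ψ : ℝ → ℝ := fun t => f (x + t • d) - t * ⟪g x, d⟫ - L / 2 * t ^ 2 * ‖d‖ ^ 2 with hψ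
  have hline : ∀ t : ℝ, HasDerivAt (fun t : ℝ => x + t • d) d t := fun t => by
    simpa using ((hasDerivAt_id t).smul_const d).const_add x
  have hφ : ∀ t : ℝ, HasDerivAt (fun t => f (x + t • d)) ⟪g (x + t • d), d⟫ t := by
    intro t
    have h1 := (hgrad (x + t • d)).hasFDerivAt
    have h2 := h1.comp_hasDerivAt t (hline t)
    simpa [InnerProductSpace.toDual_apply_apply, Function.comp_def] using h2
  have hψ' : ∀ t : ℝ, HasDerivAt ψ
      (⟪g (x + t • d), d⟫ - ⟪g x, d⟫ - L / 2 * (2 * t) * ‖d‖ ^ 2) t := by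
    intro t
    have h3 : HasDerivAt (fun t : ℝ => t * ⟪g x, d⟫) ⟪g x, d⟫ t := by
      simpa using (hasDerivAt_id t).mul_const ⟪g x, d⟫
    have h4 : HasDerivAt (fun t : ℝ => L / 2 * t ^ 2 * ‖d‖ ^ 2)
        (L / 2 * (2 * t) * ‖d‖ ^ 2) t := by
      have h4a := ((hasDerivAt_pow 2 t).const_mul (L / 2)).mul_const (‖d‖ ^ 2)
      refine h4a.congr_deriv ?_
      ring
    exact ((hφ t).sub h3).sub h4
  have hanti : AntitoneOn ψ (Set.Icc 0 1) := by
    apply antitoneOn_of_deriv_nonpos (convex_Icc 0 1)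
    · exact fun t _ => ((hψ' t).differentiableAt.continuousAt).continuousWithinAt
    · exact fun t _ => (hψ' t).differentiableAt.differentiableWithinAt
    · intro t ht
      rw [interior_Icc] at ht
      rw [(hψ' t).deriv]
      have hb : ⟪g (x + t • d), d⟫ - ⟪g x, d⟫ ≤ L * t * ‖d‖ ^ 2 := by
        have h5 : ⟪g (x + t • d) - g x, d⟫ ≤ ‖g (x + t • d) - g x‖ * ‖d‖ :=
          real_inner_le_norm _ _
        have h6 : ‖g (x + t • d) - g x‖ ≤ L * (t * ‖d‖) := by
          have := hsmooth (x + t • d) x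
          simpa [norm_smul, abs_of_pos ht.1, mul_assoc] using this
        rw [inner_sub_left] at h5
        have h7 : ‖g (x + t • d) - g x‖ * ‖d‖ ≤ L * (t * ‖d‖) * ‖d‖ :=
          mul_le_mul_of_nonneg_right h6 (norm_nonneg _)
        nlinarith [norm_nonneg d]
      nlinarith
  have h01 := hanti (Set.left_mem_Icc.mpr zero_le_one) (Set.right_mem_Icc.mpr zero_le_one)
    zero_le_one
  have hψ0 : ψ 0 = f x := by simp [hψ]
  have hψ1 : ψ 1 = f y - ⟪g x, d⟫ - L / 2 * ‖d‖ ^ 2 := by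
    simp [hψ, hd]
  rw [hψ0, hψ1] at h01
  linarith

lemma sea_coco (f : E → ℝ) (g : E → E)
    (hgrad : ∀ x, HasGradientAt f (g x) x)
    (hconv : ∀ x y, 0 ≤ f x - f y - ⟪g y, x - y⟫)
    (L : ℝ) (hL : 0 < L)
    (hsmooth : ∀ x y, ‖g x - g y‖ ≤ L * ‖x - y‖) (x y : E) :
    f x + ⟪g x, y - x⟫ + 1 / (2 * L) * ‖g x - g y‖ ^ 2 ≤ f y := by
  set dg := g y - g x with hdg
  set y' := y - (1 / L) • dg with hy'
  have hA := sea_descent f g hgrad L hL hsmooth y y'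
  have hC := hconv y' x
  have h1 : y' - y = -((1 / L) • dg) := by rw [hy']; abel
  have h2 : y' - x = (y - x) - (1 / L) • dg := by rw [hy']; abel
  rw [h1] at hA
  rw [h2] at hC
  rw [inner_neg_right, inner_smul_right, norm_neg, norm_smul] at hA
  rw [inner_sub_right, inner_smul_right] at hC
  have h3 : ⟪g y, dg⟫ - ⟪g x, dg⟫ = ‖dg‖ ^ 2 := by
    rw [← inner_sub_left, ← hdg, real_inner_self_eq_norm_sq]
  have h4 : ‖g x - g y‖ = ‖dg‖ := by rw [hdg, norm_sub_rev]
  have h5 : (‖(1:ℝ) / L‖ * ‖dg‖) ^ 2 = (1 / L) ^ 2 * ‖dg‖ ^ 2 := by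
    rw [mul_pow, Real.norm_eq_abs, sq_abs]
  rw [h5] at hA
  have hL' : (0:ℝ) < 1 / L := by positivity
  have e1 : L / 2 * ((1 / L) ^ 2 * ‖dg‖ ^ 2) = 1 / (2 * L) * ‖dg‖ ^ 2 := by
    field_simp
  have h3' : 1 / L * (⟪g y, dg⟫ - ⟪g x, dg⟫) = 1 / L * ‖dg‖ ^ 2 := by rw [h3]
  have e4 : 1 / L * ‖dg‖ ^ 2 = 2 * (1 / (2 * L) * ‖dg‖ ^ 2) := by
    field_simp
  rw [h4]
  rw [e1] at hA
  linarith [hA, hC, h3', e4]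

end aux

set_option maxHeartbeats 1000000 in
theorem symplectic_euler_agm_lyapunov
    {E : Type*} [NormedAddCommGroup E] [InnerProductSpace ℝ E] [CompleteSpace E]
    (f : E → ℝ) (g : E → E)
    (hgrad : ∀ x, HasGradientAt f (g x) x)
    (hconv : ∀ x y, 0 ≤ f x - f y - ⟪g y, x - y⟫)
    (L : ℝ) (hL : 0 < L)
    (hsmooth : ∀ x y, ‖g x - g y‖ ≤ L * ‖x - y‖)
    (Xs : E) (hmin : ∀ x, f Xs ≤ f x)
    (s : ℝ) (hs0 : 0 < s) (hsL : s ≤ 2 / L)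
    (x z : ℕ → E)
    (hz : ∀ k : ℕ, z (k + 1) = z k - (s * ((k : ℝ) / 2)) • g (x k))
    (hx : ∀ k : ℕ, x (k + 1) =
      (((k : ℝ) / 2) ^ 2 / (((k : ℝ) + 1) / 2) ^ 2) • (x k - (s / 2) • g (x k))
        + (1 - ((k : ℝ) / 2) ^ 2 / (((k : ℝ) + 1) / 2) ^ 2) • z (k + 1))
    (c : ℕ → ℝ)
    (hc : ∀ k : ℕ,
      c k = (((k : ℝ) + 1) / 2) / ((((k : ℝ) + 1) / 2) ^ 2 - ((k : ℝ) / 2) ^ 2))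
    (Φ : ℕ → ℝ)
    (hΦ : ∀ k : ℕ,
      Φ k = 2 * c k * ((k : ℝ) / 2) ^ 2
              * (f (x k) - f Xs - (s / 4) * ‖g (x k)‖ ^ 2)
            + (1 / s) * ‖z (k + 1) - Xs‖ ^ 2) :
    ∀ k : ℕ, Φ (k + 1) ≤ Φ k := by
  -- gradient vanishes at the minimizer
  have hgXs : g Xs = 0 := by
    have hloc : IsLocalMin f Xs := Filter.Eventually.of_forall hmin
    have h0 := hloc.hasFDerivAt_eq_zero (hgrad Xs).hasFDerivAt
    exact (LinearIsometryEquiv.map_eq_zero_iff _).mp h0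
  have hsL2 : s * L ≤ 2 := (le_div_iff₀ hL).mp hsL
  have hsmall : s / 4 ≤ 1 / (2 * L) := by
    rw [div_le_div_iff₀ (by norm_num) (by positivity)]
    nlinarith
  intro k
  have hck := hc k
  have hck1 := hc (k + 1)
  have hPk := hΦ k
  have hPk1 := hΦ (k + 1)
  have hzz := hz (k + 1)
  have hxx := hx k
  push_cast at hck hck1 hPk hPk1 hzz hxx
  have hn0 : (0 : ℝ) ≤ (k : ℝ) := Nat.cast_nonneg k
  set n : ℝ := (k : ℝ) with hn
  have hu : (0 : ℝ) < 2 * n + 1 := by linarith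
  have hv : (0 : ℝ) < 2 * n + 3 := by linarith
  have hn1 : (0 : ℝ) < n + 1 := by linarith
  have hu' : (2 * n + 1 : ℝ) ≠ 0 := hu.ne'
  have hv' : (2 * n + 3 : ℝ) ≠ 0 := hv.ne'
  have hn1' : (n + 1 : ℝ) ≠ 0 := hn1.ne'
  -- c-values
  have hck' : c k = 2 * (n + 1) / (2 * n + 1) := by
    rw [hck, show ((n + 1) / 2) ^ 2 - (n / 2) ^ 2 = (2 * n + 1) / 4 by ring]
    field_simp
    ring
  have hck1' : c (k + 1) = 2 * (n + 2) / (2 * n + 3) := by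
    rw [hck1, show ((n + 1 + 1) / 2) ^ 2 - ((n + 1) / 2) ^ 2 = (2 * n + 3) / 4 by ring]
    field_simp
    ring
  -- cocoercivity facts
  have hFb : 0 ≤ f (x (k + 1)) - f Xs := sub_nonneg.mpr (hmin _)
  have hS1 : f (x (k + 1)) - f Xs + s / 4 * ‖g (x (k + 1))‖ ^ 2
      ≤ ⟪g (x (k + 1)), x (k + 1) - Xs⟫ := by
    have h := sea_coco f g hgrad hconv L hL hsmooth (x (k + 1)) Xs
    rw [hgXs, sub_zero] at h
    have hin : ⟪g (x (k + 1)), Xs - x (k + 1)⟫ = -⟪g (x (k + 1)), x (k + 1) - Xs⟫ := by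
      rw [← inner_neg_right]
      congr 1
      abel
    rw [hin] at h
    have hmul : s / 4 * ‖g (x (k + 1))‖ ^ 2 ≤ 1 / (2 * L) * ‖g (x (k + 1))‖ ^ 2 :=
      mul_le_mul_of_nonneg_right hsmall (sq_nonneg _)
    linarith
  have hS2 : f (x (k + 1)) - f (x k)
      + s / 4 * (‖g (x (k + 1))‖ ^ 2 - 2 * ⟪g (x (k + 1)), g (x k)⟫ + ‖g (x k)‖ ^ 2)
      ≤ ⟪g (x (k + 1)), x (k + 1) - x k⟫ := by
    have h := sea_coco f g hgrad hconv L hL hsmooth (x (k + 1)) (x k)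
    have hin : ⟪g (x (k + 1)), x k - x (k + 1)⟫ = -⟪g (x (k + 1)), x (k + 1) - x k⟫ := by
      rw [← inner_neg_right]
      congr 1
      abel
    have hnorm : ‖g (x (k + 1)) - g (x k)‖ ^ 2
        = ‖g (x (k + 1))‖ ^ 2 - 2 * ⟪g (x (k + 1)), g (x k)⟫ + ‖g (x k)‖ ^ 2 :=
      norm_sub_sq_real _ _
    have hmul : s / 4 * (‖g (x (k + 1))‖ ^ 2 - 2 * ⟪g (x (k + 1)), g (x k)⟫ + ‖g (x k)‖ ^ 2)
        ≤ 1 / (2 * L) * (‖g (x (k + 1))‖ ^ 2 - 2 * ⟪g (x (k + 1)), g (x k)⟫ + ‖g (x k)‖ ^ 2) :=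
      mul_le_mul_of_nonneg_right hsmall (by rw [← hnorm]; positivity)
    rw [hin, hnorm] at h
    linarith
  -- scalar consequence of the x-update
  have hxx2 : ((n + 1) / 2) ^ 2 • x (k + 1)
      = (n / 2) ^ 2 • (x k - (s / 2) • g (x k))
        + (((n + 1) / 2) ^ 2 - (n / 2) ^ 2) • z (k + 1) := by
    rw [hxx, smul_add, smul_smul, smul_smul]
    have e1 : ((n + 1) / 2) ^ 2 * ((n / 2) ^ 2 / ((n + 1) / 2) ^ 2) = (n / 2) ^ 2 := by
      field_simp
    have e2 : ((n + 1) / 2) ^ 2 * (1 - (n / 2) ^ 2 / ((n + 1) / 2) ^ 2)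
        = ((n + 1) / 2) ^ 2 - (n / 2) ^ 2 := by
      field_simp
    rw [e1, e2]
  have hsc2 : ((n + 1) / 2) ^ 2 * ⟪g (x (k + 1)), x (k + 1)⟫
      = (n / 2) ^ 2 * (⟪g (x (k + 1)), x k⟫ - s / 2 * ⟪g (x (k + 1)), g (x k)⟫)
        + (((n + 1) / 2) ^ 2 - (n / 2) ^ 2) * ⟪g (x (k + 1)), z (k + 1)⟫ := by
    have h := congrArg (fun w => (⟪g (x (k + 1)), w⟫ : ℝ)) hxx2
    simpa only [inner_add_right, inner_sub_right, real_inner_smul_right] using h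
  have hWval : ⟪g (x (k + 1)), z (k + 1) - Xs⟫
      = ⟪g (x (k + 1)), x (k + 1) - Xs⟫
        + n ^ 2 / (2 * n + 1)
          * (⟪g (x (k + 1)), x (k + 1) - x k⟫ + s / 2 * ⟪g (x (k + 1)), g (x k)⟫) := by
    rw [inner_sub_right, inner_sub_right, inner_sub_right]
    field_simp
    linear_combination (-8 : ℝ) * hsc2
  -- expand the norm of the new z-iterate
  have hzv : z (k + 1 + 1) - Xs = (z (k + 1) - Xs) - (s * ((n + 1) / 2)) • g (x (k + 1)) := by
    rw [hzz]
    abel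
  have hZ2norm : ‖z (k + 1 + 1) - Xs‖ ^ 2
      = ‖z (k + 1) - Xs‖ ^ 2
        - 2 * (s * ((n + 1) / 2)) * ⟪g (x (k + 1)), z (k + 1) - Xs⟫
        + (s * ((n + 1) / 2)) ^ 2 * ‖g (x (k + 1))‖ ^ 2 := by
    rw [hzv, norm_sub_sq_real, real_inner_smul_right,
      real_inner_comm (z (k + 1) - Xs) (g (x (k + 1))), norm_smul, mul_pow,
      Real.norm_eq_abs, sq_abs]
    ring
  -- the key algebraic identity
  have key : s * ((2 * n + 1) * ((2 * n + 3) * (Φ (k + 1) - Φ k)))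
      = -(s * ((n + 1) ^ 2 * (f (x (k + 1)) - f Xs)))
        - s * (s / 2 * (n + 1) ^ 3 * ‖g (x (k + 1))‖ ^ 2)
        - s * ((2 * n + 1) * (2 * n + 3) * (n + 1)
            * (⟪g (x (k + 1)), x (k + 1) - Xs⟫ - (f (x (k + 1)) - f Xs)
              - s / 4 * ‖g (x (k + 1))‖ ^ 2))
        - s * ((2 * n + 3) * (n + 1) * n ^ 2
            * (⟪g (x (k + 1)), x (k + 1) - x k⟫ - (f (x (k + 1)) - f (x k))
              - s / 4 * (‖g (x (k + 1))‖ ^ 2 - 2 * ⟪g (x (k + 1)), g (x k)⟫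
                + ‖g (x k)‖ ^ 2))) := by
    rw [hPk1, hPk, hck', hck1', hZ2norm, hWval]
    field_simp
    ring
  -- put the pieces together
  have t1 : 0 ≤ s * ((n + 1) ^ 2 * (f (x (k + 1)) - f Xs)) :=
    mul_nonneg hs0.le (mul_nonneg (sq_nonneg _) hFb)
  have t2 : 0 ≤ s * (s / 2 * (n + 1) ^ 3 * ‖g (x (k + 1))‖ ^ 2) :=
    mul_nonneg hs0.le (mul_nonneg (mul_nonneg (by linarith) (pow_nonneg hn1.le 3))
      (sq_nonneg _))
  have t3 : 0 ≤ s * ((2 * n + 1) * (2 * n + 3) * (n + 1)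
      * (⟪g (x (k + 1)), x (k + 1) - Xs⟫ - (f (x (k + 1)) - f Xs)
        - s / 4 * ‖g (x (k + 1))‖ ^ 2)) :=
    mul_nonneg hs0.le (mul_nonneg (mul_nonneg (mul_nonneg hu.le hv.le) hn1.le)
      (by linarith))
  have t4 : 0 ≤ s * ((2 * n + 3) * (n + 1) * n ^ 2
      * (⟪g (x (k + 1)), x (k + 1) - x k⟫ - (f (x (k + 1)) - f (x k))
        - s / 4 * (‖g (x (k + 1))‖ ^ 2 - 2 * ⟪g (x (k + 1)), g (x k)⟫
          + ‖g (x k)‖ ^ 2))) :=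
    mul_nonneg hs0.le (mul_nonneg (mul_nonneg (mul_nonneg hv.le hn1.le) (sq_nonneg _))
      (by linarith))
  have hfin : s * ((2 * n + 1) * ((2 * n + 3) * (Φ (k + 1) - Φ k))) ≤ 0 := by
    rw [key]
    linarith
  by_contra hcon
  push_neg at hcon
  have hp : 0 < s * ((2 * n + 1) * ((2 * n + 3) * (Φ (k + 1) - Φ k))) :=
    mul_pos hs0 (mul_pos hu (mul_pos hv (by linarith)))
  linarith
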